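/- The resultant of the two polynomials α¹⁸ - 3α¹⁶ + 12α¹⁴ - 16α¹² + 62α¹⁰ - 38α⁸ + 44α⁶ - 8α⁴ + 9α² + 1 and α¹² + 2α¹⁰ + 15α⁸ + 12α⁶ + 15α⁴ + 2α² + 1 in Z[α] equals 2⁸⁰ · 53². In particular these two polynomials have no common root in any field of characteristic 0. -/

import Mathlib

open Polynomial

/-- The Sylvester matrix of `f` and `g`, regarded as polynomials of degree
(at most) `m` and `n` respectively. -/
def sylvester {R : Type*} [CommRing R] (f g : Polynomial R) (m n : ℕ) :
    Matrix (Fin (n + m)) (Fin (n + m)) R :=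
  Matrix.of fun i j =>
    if (i : ℕ) < n then
      (if (i : ℕ) ≤ (j : ℕ) then f.coeff ((j : ℕ) - (i : ℕ)) else 0)
    else
      (if (i : ℕ) - n ≤ (j : ℕ) then g.coeff ((j : ℕ) - ((i : ℕ) - n)) else 0)

/-- The resultant of `f` and `g` (of degrees `m` and `n`), as the determinant
of their Sylvester matrix. -/
def resultant {R : Type*} [CommRing R] (f g : Polynomial R) (m n : ℕ) : R :=
  (_root_.sylvester f g m n).det

noncomputable section

/-- `α¹⁸ - 3α¹⁶ + 12α¹⁴ - 16α¹² + 62α¹⁰ - 38α⁸ + 44α⁶ - 8α⁴ + 9α² + 1 ∈ ℤ[α]`. -/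
def p18 : Polynomial ℤ :=
  X ^ 18 - 3 * X ^ 16 + 12 * X ^ 14 - 16 * X ^ 12 + 62 * X ^ 10 - 38 * X ^ 8 +
    44 * X ^ 6 - 8 * X ^ 4 + 9 * X ^ 2 + 1

/-- `α¹² + 2α¹⁰ + 15α⁸ + 12α⁶ + 15α⁴ + 2α² + 1 ∈ ℤ[α]`. -/
def p12 : Polynomial ℤ :=
  X ^ 12 + 2 * X ^ 10 + 15 * X ^ 8 + 12 * X ^ 6 + 15 * X ^ 4 + 2 * X ^ 2 + 1

def f18c (n : ℕ) : ℤ := if n = 0 then 1 else if n = 2 then 9 else if n = 4 then -8 else if n = 6 then 44 else if n = 8 then -38 else if n = 10 then 62 else if n = 12 then -16 else if n = 14 then 12 else if n = 16 then -3 else if n = 18 then 1 else 0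

def f12c (n : ℕ) : ℤ := if n = 0 then 1 else if n = 2 then 2 else if n = 4 then 15 else if n = 6 then 12 else if n = 8 then 15 else if n = 10 then 2 else if n = 12 then 1 else 0

lemma natDegree_p18 : p18.natDegree = 18 := by unfold p18; compute_degree!

lemma natDegree_p12 : p12.natDegree = 12 := by unfold p12; compute_degree!

lemma coeff_p18 (n : ℕ) : p18.coeff n = f18c n := by
  by_cases h : n ≤ 18
  · interval_cases n <;> simp [p18, f18c, coeff_X_pow, coeff_one]
  · rw [Polynomial.coeff_eq_zero_of_natDegree_lt (by rw [natDegree_p18]; omega)]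
    unfold f18c
    repeat rw [if_neg (by omega)]

lemma coeff_p12 (n : ℕ) : p12.coeff n = f12c n := by
  by_cases h : n ≤ 12
  · interval_cases n <;> simp [p12, f12c, coeff_X_pow, coeff_one]
  · rw [Polynomial.coeff_eq_zero_of_natDegree_lt (by rw [natDegree_p12]; omega)]
    unfold f12c
    repeat rw [if_neg (by omega)]

def Asyl : Matrix (Fin 30) (Fin 30) ℤ :=
  Matrix.of fun i j =>
    if (i : ℕ) < 12 then
      (if (i : ℕ) ≤ (j : ℕ) then f18c ((j : ℕ) - (i : ℕ)) else 0)
    else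
      (if (i : ℕ) - 12 ≤ (j : ℕ) then f12c ((j : ℕ) - ((i : ℕ) - 12)) else 0)

lemma sylvester_eq : _root_.sylvester p18 p12 18 12 = Asyl := by
  funext i j
  simp only [_root_.sylvester, Asyl, Matrix.of_apply, coeff_p18, coeff_p12]

def Mcert : Matrix (Fin 30) (Fin 30) ℤ :=
!![1, 0, 0, 0, 0, 0, 0, 0, 0, 0, 0, 0, 0, 0, 0, 0, 0, 0, 0, 0, 0, 0, 0, 0, 0, 0, 0, 0, 0, 0;
  0, 1, 0, 0, 0, 0, 0, 0, 0, 0, 0, 0, 0, 0, 0, 0, 0, 0, 0, 0, 0, 0, 0, 0, 0, 0, 0, 0, 0, 0;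
  0, 0, 1, 0, 0, 0, 0, 0, 0, 0, 0, 0, 0, 0, 0, 0, 0, 0, 0, 0, 0, 0, 0, 0, 0, 0, 0, 0, 0, 0;
  0, 0, 0, 1, 0, 0, 0, 0, 0, 0, 0, 0, 0, 0, 0, 0, 0, 0, 0, 0, 0, 0, 0, 0, 0, 0, 0, 0, 0, 0;
  0, 0, 0, 0, 1, 0, 0, 0, 0, 0, 0, 0, 0, 0, 0, 0, 0, 0, 0, 0, 0, 0, 0, 0, 0, 0, 0, 0, 0, 0;
  0, 0, 0, 0, 0, 1, 0, 0, 0, 0, 0, 0, 0, 0, 0, 0, 0, 0, 0, 0, 0, 0, 0, 0, 0, 0, 0, 0, 0, 0;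
  0, 0, 0, 0, 0, 0, 1, 0, 0, 0, 0, 0, 0, 0, 0, 0, 0, 0, 0, 0, 0, 0, 0, 0, 0, 0, 0, 0, 0, 0;
  0, 0, 0, 0, 0, 0, 0, 1, 0, 0, 0, 0, 0, 0, 0, 0, 0, 0, 0, 0, 0, 0, 0, 0, 0, 0, 0, 0, 0, 0;
  0, 0, 0, 0, 0, 0, 0, 0, 1, 0, 0, 0, 0, 0, 0, 0, 0, 0, 0, 0, 0, 0, 0, 0, 0, 0, 0, 0, 0, 0;
  0, 0, 0, 0, 0, 0, 0, 0, 0, 1, 0, 0, 0, 0, 0, 0, 0, 0, 0, 0, 0, 0, 0, 0, 0, 0, 0, 0, 0, 0;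
  0, 0, 0, 0, 0, 0, 0, 0, 0, 0, 1, 0, 0, 0, 0, 0, 0, 0, 0, 0, 0, 0, 0, 0, 0, 0, 0, 0, 0, 0;
  0, 0, 0, 0, 0, 0, 0, 0, 0, 0, 0, 1, 0, 0, 0, 0, 0, 0, 0, 0, 0, 0, 0, 0, 0, 0, 0, 0, 0, 0;
  -1, 0, 7, 0, -86, 0, 862, 0, -8807, 0, 90269, 0, 1, 0, 0, 0, 0, 0, 0, 0, 0, 0, 0, 0, 0, 0, 0, 0, 0, 0;
  0, -1, 0, 7, 0, -86, 0, 862, 0, -8807, 0, 90269, 0, 1, 0, 0, 0, 0, 0, 0, 0, 0, 0, 0, 0, 0, 0, 0, 0, 0;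
  -90269, 0, -292641, 0, -1291466, 0, -1697186, 0, 1940605, 0, 6209493, 0, 90269, 0, 924524, 0, 0, 0, 0, 0, 0, 0, 0, 0, 0, 0, 0, 0, 0, 0;
  0, -90269, 0, -292641, 0, -1291466, 0, -1697186, 0, 1940605, 0, 6209493, 0, 90269, 0, 924524, 0, 0, 0, 0, 0, 0, 0, 0, 0, 0, 0, 0, 0, 0;
  -6209493, 0, -22535989, 0, -96655722, 0, -151032046, 0, 86647685, 0, 495054785, 0, 6209493, 0, 66002440, 0, 24656404, 0, 0, 0, 0, 0, 0, 0, 0, 0, 0, 0, 0, 0;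
  0, -6209493, 0, -22535989, 0, -96655722, 0, -151032046, 0, 86647685, 0, 495054785, 0, 6209493, 0, 66002440, 0, 24656404, 0, 0, 0, 0, 0, 0, 0, 0, 0, 0, 0, 0;
  -99010957, 0, -275693376, 0, -1473831648, 0, -1873853664, 0, 49456160, 0, 2126588640, 0, 99010957, 0, 968770075, 0, -259720129, 0, 2089031245, 0, 0, 0, 0, 0, 0, 0, 0, 0, 0, 0;
  0, -99010957, 0, -275693376, 0, -1473831648, 0, -1873853664, 0, 49456160, 0, 2126588640, 0, 99010957, 0, 968770075, 0, -259720129, 0, 2089031245, 0, 0, 0, 0, 0, 0, 0, 0, 0, 0;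
  66455895, 0, 117271556, 0, 821632032, 0, 265886496, 0, -1180972512, 0, -1729750432, 0, -66455895, 0, -582462821, 0, 816335191, 0, -1744719043, 0, 1957228348, 0, 0, 0, 0, 0, 0, 0, 0, 0;
  0, 66455895, 0, 117271556, 0, 821632032, 0, 265886496, 0, -1180972512, 0, -1729750432, 0, -66455895, 0, -582462821, 0, 816335191, 0, -1744719043, 0, 1957228348, 0, 0, 0, 0, 0, 0, 0, 0;
  -270273505, 0, -573090910, 0, -4072137951, 0, -3657258048, 0, -3790594304, 0, -755949632, 0, 270273505, 0, 2465005445, 0, -1916345364, 0, 11228133540, 0, -8270834557, 0, 13366988255, 0, 0, 0, 0, 0, 0, 0;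
  0, -270273505, 0, -573090910, 0, -4072137951, 0, -3657258048, 0, -3790594304, 0, -755949632, 0, 270273505, 0, 2465005445, 0, -1916345364, 0, 11228133540, 0, -8270834557, 0, 13366988255, 0, 0, 0, 0, 0, 0;
  -11811713, 0, -29637951, 0, -187542857, 0, -227818377, 0, -223553920, 0, -83275776, 0, 11811713, 0, 112319942, 0, -42024867, 0, 455825902, 0, -177492591, 0, 444156316, 0, 205083017, 0, 0, 0, 0, 0;
  0, -11811713, 0, -29637951, 0, -187542857, 0, -227818377, 0, -223553920, 0, -83275776, 0, 11811713, 0, 112319942, 0, -42024867, 0, 455825902, 0, -177492591, 0, 444156316, 0, 205083017, 0, 0, 0, 0;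
  -650592, 0, -1392035, 0, -9881565, 0, -9054011, 0, -9970011, 0, -1989760, 0, 650592, 0, 5946179, 0, -4446094, 0, 27370263, 0, -20231510, 0, 34284339, 0, -2469260, 0, 2745179, 0, 0, 0;
  0, -650592, 0, -1392035, 0, -9881565, 0, -9054011, 0, -9970011, 0, -1989760, 0, 650592, 0, 5946179, 0, -4446094, 0, 27370263, 0, -20231510, 0, 34284339, 0, -2469260, 0, 2745179, 0, 0;
  -15545, 0, -34577, 0, -238550, 0, -235630, 0, -251121, 0, -64081, 0, 15545, 0, 143392, 0, -94576, 0, 641676, 0, -424522, 0, 762040, 0, 25584, 0, 39260, 0, 9809, 0;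
  0, -15545, 0, -34577, 0, -238550, 0, -235630, 0, -251121, 0, -64081, 0, 15545, 0, 143392, 0, -94576, 0, 641676, 0, -424522, 0, 762040, 0, 25584, 0, 39260, 0, 9809]

def Vcert : Matrix (Fin 30) (Fin 30) ℤ :=
!![1, 0, 9, 0, -8, 0, 44, 0, -38, 0, 62, 0, -16, 0, 12, 0, -3, 0, 1, 0, 0, 0, 0, 0, 0, 0, 0, 0, 0, 0;
  0, 1, 0, 9, 0, -8, 0, 44, 0, -38, 0, 62, 0, -16, 0, 12, 0, -3, 0, 1, 0, 0, 0, 0, 0, 0, 0, 0, 0, 0;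
  0, 0, 1, 0, 9, 0, -8, 0, 44, 0, -38, 0, 62, 0, -16, 0, 12, 0, -3, 0, 1, 0, 0, 0, 0, 0, 0, 0, 0, 0;
  0, 0, 0, 1, 0, 9, 0, -8, 0, 44, 0, -38, 0, 62, 0, -16, 0, 12, 0, -3, 0, 1, 0, 0, 0, 0, 0, 0, 0, 0;
  0, 0, 0, 0, 1, 0, 9, 0, -8, 0, 44, 0, -38, 0, 62, 0, -16, 0, 12, 0, -3, 0, 1, 0, 0, 0, 0, 0, 0, 0;
  0, 0, 0, 0, 0, 1, 0, 9, 0, -8, 0, 44, 0, -38, 0, 62, 0, -16, 0, 12, 0, -3, 0, 1, 0, 0, 0, 0, 0, 0;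
  0, 0, 0, 0, 0, 0, 1, 0, 9, 0, -8, 0, 44, 0, -38, 0, 62, 0, -16, 0, 12, 0, -3, 0, 1, 0, 0, 0, 0, 0;
  0, 0, 0, 0, 0, 0, 0, 1, 0, 9, 0, -8, 0, 44, 0, -38, 0, 62, 0, -16, 0, 12, 0, -3, 0, 1, 0, 0, 0, 0;
  0, 0, 0, 0, 0, 0, 0, 0, 1, 0, 9, 0, -8, 0, 44, 0, -38, 0, 62, 0, -16, 0, 12, 0, -3, 0, 1, 0, 0, 0;
  0, 0, 0, 0, 0, 0, 0, 0, 0, 1, 0, 9, 0, -8, 0, 44, 0, -38, 0, 62, 0, -16, 0, 12, 0, -3, 0, 1, 0, 0;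
  0, 0, 0, 0, 0, 0, 0, 0, 0, 0, 1, 0, 9, 0, -8, 0, 44, 0, -38, 0, 62, 0, -16, 0, 12, 0, -3, 0, 1, 0;
  0, 0, 0, 0, 0, 0, 0, 0, 0, 0, 0, 1, 0, 9, 0, -8, 0, 44, 0, -38, 0, 62, 0, -16, 0, 12, 0, -3, 0, 1;
  0, 0, 0, 0, 0, 0, 0, 0, 0, 0, 0, 0, 924524, 0, -1147872, 0, 4361409, 0, -3991102, 0, 5748199, 0, -1552660, 0, 1110511, 0, -279614, 0, 90269, 0;
  0, 0, 0, 0, 0, 0, 0, 0, 0, 0, 0, 0, 0, 924524, 0, -1147872, 0, 4361409, 0, -3991102, 0, 5748199, 0, -1552660, 0, 1110511, 0, -279614, 0, 90269;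
  0, 0, 0, 0, 0, 0, 0, 0, 0, 0, 0, 0, 0, 0, 24656404, 0, 111671741, 0, -103198186, 0, 337154411, 0, -72264536, 0, 66994915, 0, -16687874, 0, 6209493, 0;
  0, 0, 0, 0, 0, 0, 0, 0, 0, 0, 0, 0, 0, 0, 0, 24656404, 0, 111671741, 0, -103198186, 0, 337154411, 0, -72264536, 0, 66994915, 0, -16687874, 0, 6209493;
  0, 0, 0, 0, 0, 0, 0, 0, 0, 0, 0, 0, 0, 0, 0, 0, 10445156225, 0, -12121882814, 0, 27762080335, 0, -6524663924, 0, 5529682319, 0, -1398516670, 0, 495054785, 0;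
  0, 0, 0, 0, 0, 0, 0, 0, 0, 0, 0, 0, 0, 0, 0, 0, 0, 10445156225, 0, -12121882814, 0, 27762080335, 0, -6524663924, 0, 5529682319, 0, -1398516670, 0, 495054785;
  0, 0, 0, 0, 0, 0, 0, 0, 0, 0, 0, 0, 0, 0, 0, 0, 0, 0, -62631307136, 0, 112716754720, 0, -29284214976, 0, 23496841536, 0, -6330309760, 0, 2126588640, 0;
  0, 0, 0, 0, 0, 0, 0, 0, 0, 0, 0, 0, 0, 0, 0, 0, 0, 0, 0, -62631307136, 0, 112716754720, 0, -29284214976, 0, 23496841536, 0, -6330309760, 0, 2126588640;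
  0, 0, 0, 0, 0, 0, 0, 0, 0, 0, 0, 0, 0, 0, 0, 0, 0, 0, 0, 0, -85548724832, 0, 13528309312, 0, -16948201152, 0, 4008278784, 0, -1729750432, 0;
  0, 0, 0, 0, 0, 0, 0, 0, 0, 0, 0, 0, 0, 0, 0, 0, 0, 0, 0, 0, 0, -85548724832, 0, 13528309312, 0, -16948201152, 0, 4008278784, 0, -1729750432;
  0, 0, 0, 0, 0, 0, 0, 0, 0, 0, 0, 0, 0, 0, 0, 0, 0, 0, 0, 0, 0, 0, -13125313088, 0, -1356870720, 0, -1522745408, 0, -755949632, 0;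
  0, 0, 0, 0, 0, 0, 0, 0, 0, 0, 0, 0, 0, 0, 0, 0, 0, 0, 0, 0, 0, 0, 0, -13125313088, 0, -1356870720, 0, -1522745408, 0, -755949632;
  0, 0, 0, 0, 0, 0, 0, 0, 0, 0, 0, 0, 0, 0, 0, 0, 0, 0, 0, 0, 0, 0, 0, 0, -351382912, 0, 26273408, 0, -83275776, 0;
  0, 0, 0, 0, 0, 0, 0, 0, 0, 0, 0, 0, 0, 0, 0, 0, 0, 0, 0, 0, 0, 0, 0, 0, 0, -351382912, 0, 26273408, 0, -83275776;
  0, 0, 0, 0, 0, 0, 0, 0, 0, 0, 0, 0, 0, 0, 0, 0, 0, 0, 0, 0, 0, 0, 0, 0, 0, 0, -1255552, 0, -1989760, 0;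
  0, 0, 0, 0, 0, 0, 0, 0, 0, 0, 0, 0, 0, 0, 0, 0, 0, 0, 0, 0, 0, 0, 0, 0, 0, 0, 0, -1255552, 0, -1989760;
  0, 0, 0, 0, 0, 0, 0, 0, 0, 0, 0, 0, 0, 0, 0, 0, 0, 0, 0, 0, 0, 0, 0, 0, 0, 0, 0, 0, -54272, 0;
  0, 0, 0, 0, 0, 0, 0, 0, 0, 0, 0, 0, 0, 0, 0, 0, 0, 0, 0, 0, 0, 0, 0, 0, 0, 0, 0, 0, 0, -54272]

set_option maxRecDepth 100000 in
set_option maxHeartbeats 12000000 in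
lemma MA_eq_V : Mcert * Asyl = Vcert := by
  funext i j
  revert j
  fin_cases i <;> decide

set_option maxRecDepth 40000 in
set_option maxHeartbeats 4000000 in
lemma det_Mcert : Mcert.det = 47335400234740877440473285580438048862194972882784240592447825823164836864162287330359317636149916064940032999937845760000 := by
  have h : ∀ i j : Fin 30, i < j → Mcert i j = 0 := by
    letI : ∀ a b : Fin 30, Decidable (Mcert a b = 0) := fun a b => Int.decEq _ _
    decide
  rw [Matrix.det_of_lowerTriangular Mcert (fun i j hij => h i j hij)]
  decide

set_option maxRecDepth 40000 in
set_option maxHeartbeats 4000000 in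
lemma det_Vcert : Vcert.det = 160744989959327887010309208965776796985713753484116287214786948696889768393522584807613073221576169281876586334775851708752038842173619934425251840000 := by
  have h : ∀ i j : Fin 30, j < i → Vcert i j = 0 := by
    letI : ∀ a b : Fin 30, Decidable (Vcert a b = 0) := fun a b => Int.decEq _ _
    decide
  rw [Matrix.det_of_upperTriangular (fun i j hij => h i j hij)]
  decide

lemma det_mul_of_eq {n : ℕ} (M A V : Matrix (Fin n) (Fin n) ℤ) (h : M * A = V) :
    M.det * A.det = V.det := by rw [← Matrix.det_mul, h]

lemma det_Asyl : Asyl.det = 2 ^ 80 * 53 ^ 2 := by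
  have h := det_mul_of_eq Mcert Asyl Vcert MA_eq_V
  rw [det_Mcert, det_Vcert] at h
  have hc : (47335400234740877440473285580438048862194972882784240592447825823164836864162287330359317636149916064940032999937845760000 : ℤ) ≠ 0 := by norm_num
  apply mul_left_cancel₀ hc
  rw [h]; norm_num

/-- The resultant of the two polynomials equals `2⁸⁰ · 53²`; in particular they
have no common root in any field of characteristic `0`. -/
theorem stmt_18 :
    _root_.resultant p18 p12 18 12 = 2 ^ 80 * 53 ^ 2 ∧
    ∀ (K : Type*) [Field K] [CharZero K] (α : K),
      ¬(Polynomial.aeval α p18 = 0 ∧ Polynomial.aeval α p12 = 0) := by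
  constructor
  · rw [_root_.resultant, sylvester_eq, det_Asyl]
  · intro K _ _ α h
    obtain ⟨h1, h2⟩ := h
    simp only [p18, p12, map_add, map_sub, map_mul, map_pow, map_one, map_ofNat,
      aeval_X] at h1 h2
    have key : (54272 : K) = 0 := by
      linear_combination ((7409 : K) + (-82287 : K) * α ^ 2 + (-64330 : K) * α ^ 4 + (-101410 : K) * α ^ 6 + (-12695 : K) * α ^ 8 + (-6959 : K) * α ^ 10) * h1 + ((46863 : K) + (-78120 : K) * α ^ 2 + (317480 : K) * α ^ 4 + (-329428 : K) * α ^ 6 + (444066 : K) * α ^ 8 + (-124208 : K) * α ^ 10 + (86648 : K) * α ^ 12 + (-22100 : K) * α ^ 14 + (6959 : K) * α ^ 16) * h2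
    norm_num at key

end
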